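/- Let U ⊆ ℝ × ℝ be open and convex, and let P, u : U → E be smooth with ‖u k‖ = 1 for all k ∈ U. Then the family (P, u) is normal if and only if ⟪D₁ P k, D₂ u k⟫ = ⟪D₂ P k, D₁ u k⟫ for all k ∈ U. In other words, a rank-2 family of oriented lines is normal if and only if it is isotropic (Lagrangian) for the symplectic form dP ∧ du. -/

import Mathlib

open RealInnerProductSpace

noncomputable section

/-- The Euclidean affine space in which light propagates. -/
abbrev E : Type := EuclideanSpace ℝ (Fin 3)

/-- Partial derivative in the first coordinate direction of `ℝ × ℝ`. -/
def D1 {F : Type*} [NormedAddCommGroup F] [NormedSpace ℝ F] (f : ℝ × ℝ → F) (k : ℝ × ℝ) : F :=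
  fderiv ℝ f k (1, 0)

/-- Partial derivative in the second coordinate direction of `ℝ × ℝ`. -/
def D2 {F : Type*} [NormedAddCommGroup F] [NormedSpace ℝ F] (f : ℝ × ℝ → F) (k : ℝ × ℝ) : F :=
  fderiv ℝ f k (0, 1)

/-- A rank-2 family of oriented lines `(P, u)` is *normal* if there is a smooth
function `lam` such that the surface `k ↦ P k + lam k • u k` is orthogonal to all
the lines of the family. -/
def IsNormal (U : Set (ℝ × ℝ)) (P u : ℝ × ℝ → E) : Prop :=
  ∃ lam : ℝ × ℝ → ℝ, ContDiffOn ℝ (⊤ : ℕ∞) lam U ∧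
    ∀ k ∈ U, ⟪u k, D1 (fun k => P k + lam k • u k) k⟫ = 0 ∧
             ⟪u k, D2 (fun k => P k + lam k • u k) k⟫ = 0

namespace NormalLagrangianAux

open Metric intervalIntegral Set

set_option maxHeartbeats 1000000 in
/-- Poincaré lemma on a convex open set of `ℝ × ℝ`: derivative of the
line-integral potential of a 1-form with symmetric derivative. -/
theorem poincare_hasFDerivAt
    {U : Set (ℝ × ℝ)} (hU : IsOpen U) (hconv : Convex ℝ U) {x₀ : ℝ × ℝ} (hx₀ : x₀ ∈ U)
    {ω : ℝ × ℝ → (ℝ × ℝ) →L[ℝ] ℝ} (hω : ContDiffOn ℝ (⊤ : ℕ∞) ω U)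
    (hsym : ∀ k ∈ U, ∀ v w, fderiv ℝ ω k v w = fderiv ℝ ω k w v)
    {k : ℝ × ℝ} (hk : k ∈ U) :
    HasFDerivAt (fun x => ∫ t in (0:ℝ)..1, ω (x₀ + t • (x - x₀)) (x - x₀)) (ω k) k := by
  have hmemU : ∀ x ∈ U, ∀ t ∈ Icc (0:ℝ) 1, x₀ + t • (x - x₀) ∈ U := by
    intro x hx t ht
    have h := hconv (a := 1 - t) (b := t) hx₀ hx (by linarith [ht.2]) ht.1 (by ring)
    convert h using 1
    module
  obtain ⟨ε, εpos, hball⟩ : ∃ ε > 0, closedBall k ε ⊆ U := by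
    rcases Metric.isOpen_iff.1 hU k hk with ⟨δ, δpos, hδ⟩
    exact ⟨δ/2, by linarith, (closedBall_subset_ball (by linarith)).trans hδ⟩
  set c : ℝ × ℝ → ℝ → ℝ × ℝ := fun x t => x₀ + t • (x - x₀) with hc
  have hcmemU : ∀ x ∈ closedBall k ε, ∀ t ∈ Icc (0:ℝ) 1, c x t ∈ U :=
    fun x hx t ht => hmemU x (hball hx) t ht
  set S : Set (ℝ × ℝ) :=
    (fun p : ℝ × (ℝ × ℝ) => x₀ + p.1 • (p.2 - x₀)) '' (Icc (0:ℝ) 1 ×ˢ closedBall k ε)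
  have hScomp : IsCompact S :=
    (isCompact_Icc.prod (isCompact_closedBall k ε)).image (by fun_prop)
  have hSU : S ⊆ U := by
    rintro _ ⟨⟨t, x⟩, ⟨ht, hx⟩, rfl⟩
    exact hcmemU x hx t ht
  have hSmem : ∀ x ∈ closedBall k ε, ∀ t ∈ Icc (0:ℝ) 1, c x t ∈ S :=
    fun x hx t ht => ⟨(t, x), ⟨ht, hx⟩, rfl⟩
  have hωc : ContinuousOn ω U := hω.continuousOn
  have hω'c : ContinuousOn (fderiv ℝ ω) U :=
    hω.continuousOn_fderiv_of_isOpen hU (by exact_mod_cast le_top)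
  obtain ⟨C₁, hC₁⟩ := hScomp.exists_bound_of_continuousOn (hωc.mono hSU)
  obtain ⟨C₂, hC₂⟩ := hScomp.exists_bound_of_continuousOn (f := fderiv ℝ ω) (hω'c.mono hSU :)
  have hC₂0 : 0 ≤ C₂ := le_trans (norm_nonneg _)
    (hC₂ _ (hSmem k (mem_closedBall_self εpos.le) 0 ⟨le_refl 0, zero_le_one⟩))
  set F : ℝ × ℝ → ℝ → ℝ := fun x t => ω (c x t) (x - x₀) with hF
  set F' : ℝ × ℝ → ℝ → (ℝ × ℝ) →L[ℝ] ℝ := fun x t =>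
    ω (c x t) + t • ((ContinuousLinearMap.apply ℝ ℝ (x - x₀)).comp (fderiv ℝ ω (c x t)))
    with hF'
  have hIoc : Set.uIoc (0:ℝ) 1 ⊆ Icc (0:ℝ) 1 := by
    rw [Set.uIoc_of_le zero_le_one]; exact Ioc_subset_Icc_self
  have hdiff : ∀ t ∈ Icc (0:ℝ) 1, ∀ x ∈ ball k ε,
      HasFDerivAt (fun x => F x t) (F' x t) x := by
    intro t ht x hx
    have hcx : c x t ∈ U := hcmemU x (ball_subset_closedBall hx) t ht
    have hωd : HasFDerivAt ω (fderiv ℝ ω (c x t)) (c x t) :=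
      (hω.differentiableOn (by simp) |>.differentiableAt
        (hU.mem_nhds hcx)).hasFDerivAt
    have hcd : HasFDerivAt (fun x => c x t) (t • ContinuousLinearMap.id ℝ (ℝ × ℝ)) x := by
      exact (((hasFDerivAt_id x).sub_const x₀).const_smul t).const_add x₀
    have hA : HasFDerivAt (fun x => ω (c x t))
        ((fderiv ℝ ω (c x t)).comp (t • ContinuousLinearMap.id ℝ (ℝ × ℝ))) x := hωd.comp x hcd
    have hB : HasFDerivAt (fun x => x - x₀) (ContinuousLinearMap.id ℝ (ℝ × ℝ)) x := by
      simpa using (hasFDerivAt_id x).sub_const x₀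
    have := hA.clm_apply hB
    refine this.congr_fderiv ?_
    refine ContinuousLinearMap.ext fun v => ?_
    simp [hF', ContinuousLinearMap.smul_apply, mul_comm]
  refine (intervalIntegral.hasFDerivAt_integral_of_dominated_of_fderiv_le (F := F) (F' := F')
    (bound := fun _ => C₁ + C₂ * (‖k - x₀‖ + ε)) (ball_mem_nhds k εpos) ?_ ?_ ?_ ?_ ?_ ?_).congr_fderiv ?_
  · filter_upwards [ball_mem_nhds k εpos] with x hx
    have : ContinuousOn (F x) (Icc 0 1) := by
      have h1 : ContinuousOn (fun t => ω (c x t)) (Icc (0:ℝ) 1) :=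
        hωc.comp (by fun_prop) (fun t ht => hcmemU x (ball_subset_closedBall hx) t ht)
      exact (ContinuousLinearMap.apply ℝ ℝ (x - x₀)).continuous.comp_continuousOn h1
    exact (this.mono hIoc).aestronglyMeasurable measurableSet_uIoc
  · apply ContinuousOn.intervalIntegrable
    rw [Set.uIcc_of_le zero_le_one]
    have h1 : ContinuousOn (fun t => ω (c k t)) (Icc (0:ℝ) 1) :=
      hωc.comp (by fun_prop) (fun t ht => hcmemU k (mem_closedBall_self εpos.le) t ht)
    exact (ContinuousLinearMap.apply ℝ ℝ (k - x₀)).continuous.comp_continuousOn h1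
  · have : ContinuousOn (F' k) (Icc 0 1) := by
      have h1 : ContinuousOn (fun t => ω (c k t)) (Icc (0:ℝ) 1) :=
        hωc.comp (by fun_prop) (fun t ht => hcmemU k (mem_closedBall_self εpos.le) t ht)
      have h2 : ContinuousOn (fun t => fderiv ℝ ω (c k t)) (Icc (0:ℝ) 1) :=
        hω'c.comp (by fun_prop) (fun t ht => hcmemU k (mem_closedBall_self εpos.le) t ht)
      exact h1.add (continuousOn_id.smul
        ((ContinuousLinearMap.compL ℝ (ℝ × ℝ) ((ℝ × ℝ) →L[ℝ] ℝ) ℝ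
          (ContinuousLinearMap.apply ℝ ℝ (k - x₀))).continuous.comp_continuousOn h2))
    exact (this.mono hIoc).aestronglyMeasurable measurableSet_uIoc
  · refine Filter.Eventually.of_forall fun t => fun ht x hx => ?_
    have ht' : t ∈ Icc (0:ℝ) 1 := hIoc ht
    have hx' : x ∈ closedBall k ε := ball_subset_closedBall hx
    have hcS : c x t ∈ S := hSmem x hx' t ht'
    have hxx : ‖x - x₀‖ ≤ ‖k - x₀‖ + ε := by
      calc ‖x - x₀‖ = ‖(k - x₀) + (x - k)‖ := by
            rw [show x - x₀ = (k - x₀) + (x - k) by abel]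
        _ ≤ ‖k - x₀‖ + ‖x - k‖ := norm_add_le _ _
        _ ≤ ‖k - x₀‖ + ε := by
            have := mem_closedBall_iff_norm.1 hx'
            linarith
    have habs : |t| ≤ 1 := by
      rw [abs_le]; constructor <;> [linarith [ht'.1]; linarith [ht'.2]]
    have hcompnorm : ‖(ContinuousLinearMap.apply ℝ ℝ (x - x₀)).comp (fderiv ℝ ω (c x t))‖
        ≤ ‖fderiv ℝ ω (c x t)‖ * ‖x - x₀‖ := by
      refine ContinuousLinearMap.opNorm_le_bound _ (by positivity) fun v => ?_
      calc ‖((ContinuousLinearMap.apply ℝ ℝ (x - x₀)).comp (fderiv ℝ ω (c x t))) v‖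
          = ‖fderiv ℝ ω (c x t) v (x - x₀)‖ := rfl
        _ ≤ ‖fderiv ℝ ω (c x t) v‖ * ‖x - x₀‖ := ContinuousLinearMap.le_opNorm _ _
        _ ≤ (‖fderiv ℝ ω (c x t)‖ * ‖v‖) * ‖x - x₀‖ := by
            gcongr; exact ContinuousLinearMap.le_opNorm _ _
        _ = ‖fderiv ℝ ω (c x t)‖ * ‖x - x₀‖ * ‖v‖ := by ring
    calc ‖F' x t‖ ≤ ‖ω (c x t)‖ +
        ‖t • ((ContinuousLinearMap.apply ℝ ℝ (x - x₀)).comp (fderiv ℝ ω (c x t)))‖ :=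
          norm_add_le _ _
      _ ≤ C₁ + C₂ * (‖k - x₀‖ + ε) := by
          gcongr ?_ + ?_
          · exact hC₁ _ hcS
          · rw [norm_smul]
            calc |t| * ‖(ContinuousLinearMap.apply ℝ ℝ (x - x₀)).comp (fderiv ℝ ω (c x t))‖
                ≤ 1 * (‖fderiv ℝ ω (c x t)‖ * ‖x - x₀‖) :=
                  mul_le_mul habs hcompnorm (norm_nonneg _) zero_le_one
              _ ≤ 1 * (C₂ * (‖k - x₀‖ + ε)) := by
                  rw [one_mul, one_mul]
                  exact mul_le_mul (hC₂ _ hcS) hxx (norm_nonneg _) hC₂0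
              _ = C₂ * (‖k - x₀‖ + ε) := one_mul _
  · exact intervalIntegrable_const
  · exact Filter.Eventually.of_forall fun t ht x hx => hdiff t (hIoc ht) x hx
  · have hmemk : ∀ t ∈ Icc (0:ℝ) 1, c k t ∈ U := hcmemU k (mem_closedBall_self εpos.le)
    have h1k : ContinuousOn (fun t => ω (c k t)) (Icc (0:ℝ) 1) :=
      hωc.comp (by fun_prop) hmemk
    have h2k : ContinuousOn (fun t => fderiv ℝ ω (c k t)) (Icc (0:ℝ) 1) :=
      hω'c.comp (by fun_prop) hmemk
    have hF'kc : ContinuousOn (F' k) (Icc (0:ℝ) 1) :=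
      h1k.add (continuousOn_id.smul
        ((ContinuousLinearMap.compL ℝ (ℝ × ℝ) ((ℝ × ℝ) →L[ℝ] ℝ) ℝ
          (ContinuousLinearMap.apply ℝ ℝ (k - x₀))).continuous.comp_continuousOn h2k))
    have hint : IntervalIntegrable (F' k) MeasureTheory.volume 0 1 := by
      apply ContinuousOn.intervalIntegrable
      rw [Set.uIcc_of_le zero_le_one]; exact hF'kc
    refine ContinuousLinearMap.ext fun v => ?_
    rw [ContinuousLinearMap.intervalIntegral_apply hint v]
    have hg : ∀ t ∈ uIcc (0:ℝ) 1, HasDerivAt (fun s => s * ω (c k s) v)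
        (ω (c k t) v + t * (fderiv ℝ ω (c k t) (k - x₀) v)) t := by
      intro t ht
      rw [Set.uIcc_of_le zero_le_one] at ht
      have hωd : HasFDerivAt ω (fderiv ℝ ω (c k t)) (c k t) :=
        (hω.differentiableOn (by simp) |>.differentiableAt
          (hU.mem_nhds (hmemk t ht))).hasFDerivAt
      have hcd : HasDerivAt (fun s : ℝ => c k s) (k - x₀) t := by
        simpa [hc] using ((hasDerivAt_id t).smul_const (k - x₀)).const_add x₀
      have h3 : HasDerivAt (fun s => ω (c k s)) (fderiv ℝ ω (c k t) (k - x₀)) t :=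
        hωd.comp_hasDerivAt t hcd
      have h4 : HasDerivAt (fun s => ω (c k s) v) (fderiv ℝ ω (c k t) (k - x₀) v) t := by
        simpa using h3.clm_apply (hasDerivAt_const t v)
      simpa [add_comm] using (hasDerivAt_id t).fun_mul h4
    have hintg : IntervalIntegrable
        (fun t => ω (c k t) v + t * (fderiv ℝ ω (c k t) (k - x₀) v))
        MeasureTheory.volume 0 1 := by
      apply ContinuousOn.intervalIntegrable
      rw [Set.uIcc_of_le zero_le_one]
      refine ((ContinuousLinearMap.apply ℝ ℝ v).continuous.comp_continuousOn h1k).add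
        (continuousOn_id.mul ((ContinuousLinearMap.apply ℝ ℝ v).continuous.comp_continuousOn
          ((ContinuousLinearMap.apply ℝ ((ℝ × ℝ) →L[ℝ] ℝ)
            (k - x₀)).continuous.comp_continuousOn h2k)))
    calc ∫ t in (0:ℝ)..1, F' k t v
        = ∫ t in (0:ℝ)..1, (ω (c k t) v + t * (fderiv ℝ ω (c k t) (k - x₀) v)) := by
          apply intervalIntegral.integral_congr
          intro t ht
          rw [Set.uIcc_of_le zero_le_one] at ht
          have hs := hsym (c k t) (hmemk t ht) v (k - x₀)
          simp only [hF', ContinuousLinearMap.add_apply, ContinuousLinearMap.smul_apply,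
            ContinuousLinearMap.coe_comp', Function.comp_apply,
            ContinuousLinearMap.apply_apply, smul_eq_mul]
          rw [hs]
      _ = (fun s : ℝ => s * ω (c k s) v) 1 - (fun s : ℝ => s * ω (c k s) v) 0 :=
          intervalIntegral.integral_eq_sub_of_hasDerivAt hg hintg
      _ = ω k v := by simp [hc]

theorem poincare_exists {U : Set (ℝ × ℝ)} (hU : IsOpen U) (hconv : Convex ℝ U)
    {ω : ℝ × ℝ → (ℝ × ℝ) →L[ℝ] ℝ} (hω : ContDiffOn ℝ (⊤ : ℕ∞) ω U)
    (hsym : ∀ k ∈ U, ∀ v w, fderiv ℝ ω k v w = fderiv ℝ ω k w v) :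
    ∃ lam : ℝ × ℝ → ℝ, ContDiffOn ℝ (⊤ : ℕ∞) lam U ∧ ∀ k ∈ U, HasFDerivAt lam (ω k) k := by
  rcases U.eq_empty_or_nonempty with rfl | ⟨x₀, hx₀⟩
  · exact ⟨0, contDiffOn_const, fun k hk => absurd hk (by simp)⟩
  have hH : ∀ k ∈ U,
      HasFDerivAt (fun x => ∫ t in (0:ℝ)..1, ω (x₀ + t • (x - x₀)) (x - x₀)) (ω k) k :=
    fun k hk => poincare_hasFDerivAt hU hconv hx₀ hω hsym hk
  refine ⟨_, ?_, hH⟩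
  rw [show ((⊤ : ℕ∞) : WithTop ℕ∞) = (⊤ : ℕ∞) from rfl, contDiffOn_infty_iff_fderiv_of_isOpen hU]
  exact ⟨fun k hk => (hH k hk).differentiableAt.differentiableWithinAt,
    hω.congr fun x hx => (hH x hx).fderiv⟩

/-- Expansion of a linear map on `ℝ × ℝ` in the standard basis. -/
theorem clm_expand {F : Type*} [NormedAddCommGroup F] [NormedSpace ℝ F]
    (A : (ℝ × ℝ) →L[ℝ] F) (v : ℝ × ℝ) :
    A v = v.1 • A (1, 0) + v.2 • A (0, 1) := by
  conv_lhs => rw [show v = v.1 • ((1, 0) : ℝ × ℝ) + v.2 • ((0, 1) : ℝ × ℝ) by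
    simp [Prod.ext_iff]]
  rw [map_add, map_smul, map_smul]

end NormalLagrangianAux

open NormalLagrangianAux

theorem normal_iff_lagrangian
    (U : Set (ℝ × ℝ)) (hU : IsOpen U) (hconv : Convex ℝ U)
    (P u : ℝ × ℝ → E)
    (hP : ContDiffOn ℝ (⊤ : ℕ∞) P U) (hu : ContDiffOn ℝ (⊤ : ℕ∞) u U)
    (hunit : ∀ k ∈ U, ‖u k‖ = 1) :
    IsNormal U P u ↔ ∀ k ∈ U, ⟪D1 P k, D2 u k⟫ = ⟪D2 P k, D1 u k⟫ := by
  have hPk : ∀ k ∈ U, HasFDerivAt P (fderiv ℝ P k) k := fun k hk =>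
    ((hP.differentiableOn (by simp)).differentiableAt
      (hU.mem_nhds hk)).hasFDerivAt
  have huk : ∀ k ∈ U, HasFDerivAt u (fderiv ℝ u k) k := fun k hk =>
    ((hu.differentiableOn (by simp)).differentiableAt
      (hU.mem_nhds hk)).hasFDerivAt
  have hunit' : ∀ k ∈ U, ⟪u k, u k⟫ = (1:ℝ) := fun k hk => by
    rw [real_inner_self_eq_norm_mul_norm, hunit k hk]; norm_num
  -- ⟪u, ∂u v⟫ = 0
  have hinner_u : ∀ k ∈ U, ∀ v, ⟪u k, fderiv ℝ u k v⟫ = 0 := by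
    intro k hk v
    have hd := (huk k hk).inner ℝ (huk k hk)
    have heq : (fun x => ⟪u x, u x⟫) =ᶠ[nhds k] fun _ => (1:ℝ) := by
      filter_upwards [hU.mem_nhds hk] with x hx using hunit' x hx
    have h0 : HasFDerivAt (fun x => ⟪u x, u x⟫) 0 k :=
      (hasFDerivAt_const (𝕜 := ℝ) (1:ℝ) k).congr_of_eventuallyEq heq
    have huniq := hd.unique h0
    have happ := congrArg (fun (L : (ℝ × ℝ) →L[ℝ] ℝ) => L v) huniq
    simp only [ContinuousLinearMap.zero_apply, ContinuousLinearMap.coe_comp',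
      Function.comp_apply, ContinuousLinearMap.prod_apply, fderivInnerCLM_apply] at happ
    have hcomm := real_inner_comm (fderiv ℝ u k v) (u k)
    linarith [happ, hcomm]
  -- the canonical 1-form
  set g : (ℝ × ℝ) → (ℝ × ℝ) →L[ℝ] ℝ :=
    fun k => -((innerSL ℝ (u k)).comp (fderiv ℝ P k)) with hgdef
  have hgval : ∀ k v, g k v = -⟪u k, fderiv ℝ P k v⟫ := fun k v => by simp [hgdef]
  have hfP : ContDiffOn ℝ (⊤ : ℕ∞) (fderiv ℝ P) U :=
    hP.fderiv_of_isOpen hU (by simp)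
  have hgsmooth : ContDiffOn ℝ (⊤ : ℕ∞) g U := by
    have h1 : ContDiffOn ℝ (⊤ : ℕ∞) (fun k => innerSL ℝ (u k)) U :=
      (innerSL ℝ (E := E)).contDiff.comp_contDiffOn hu
    exact (h1.clm_comp hfP).neg
  have hfPd : ∀ k ∈ U, HasFDerivAt (fun x => fderiv ℝ P x) (fderiv ℝ (fderiv ℝ P) k) k :=
    fun k hk => ((hfP.differentiableOn (by simp)).differentiableAt
      (hU.mem_nhds hk)).hasFDerivAt
  -- symmetry of the second derivative of P
  have hPsym : ∀ k ∈ U, ∀ v w,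
      fderiv ℝ (fderiv ℝ P) k v w = fderiv ℝ (fderiv ℝ P) k w v := by
    intro k hk v w
    have hev : ∀ᶠ y in nhds k, HasFDerivAt P (fderiv ℝ P y) y := by
      filter_upwards [hU.mem_nhds hk] with y hy using hPk y hy
    exact second_derivative_symmetric_of_eventually hev (hfPd k hk) v w
  -- derivative of g
  have hgderiv : ∀ k ∈ U, HasFDerivAt g (fderiv ℝ g k) k ∧
      ∀ v w, fderiv ℝ g k v w
        = -(⟪fderiv ℝ u k v, fderiv ℝ P k w⟫ + ⟪u k, fderiv ℝ (fderiv ℝ P) k v w⟫) := by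
    intro k hk
    have hA : HasFDerivAt (fun x => innerSL ℝ (u x))
        ((innerSL ℝ (E := E)).comp (fderiv ℝ u k)) k :=
      (innerSL ℝ (E := E)).hasFDerivAt.comp k (huk k hk)
    have hgd := (hA.clm_comp (hfPd k hk)).neg
    have e := hgd.fderiv
    exact ⟨e ▸ hgd, fun v w => by rw [show fderiv ℝ g k = _ from e]; simp; ring⟩
  -- surface-orthogonality computation
  have hsurf : ∀ (lam : ℝ × ℝ → ℝ) (k : ℝ × ℝ), k ∈ U → ∀ (l' : (ℝ × ℝ) →L[ℝ] ℝ),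
      HasFDerivAt lam l' k → ∀ v,
      ⟪u k, fderiv ℝ (fun x => P x + lam x • u x) k v⟫ = ⟪u k, fderiv ℝ P k v⟫ + l' v := by
    intro lam k hk l' hl v
    have hsum : HasFDerivAt (fun x => P x + lam x • u x)
        (fderiv ℝ P k + (lam k • fderiv ℝ u k + l'.smulRight (u k))) k :=
      (hPk k hk).add (hl.smul (huk k hk))
    rw [hsum.fderiv]
    simp only [ContinuousLinearMap.add_apply, ContinuousLinearMap.smul_apply,
      ContinuousLinearMap.smulRight_apply]
    rw [inner_add_right, inner_add_right, real_inner_smul_right, real_inner_smul_right,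
      hinner_u k hk v, hunit' k hk]
    ring
  constructor
  · -- normal → Lagrangian
    rintro ⟨lam, hlam, horth⟩ k hk
    have hlamd : ∀ y ∈ U, HasFDerivAt lam (fderiv ℝ lam y) y := fun y hy =>
      ((hlam.differentiableOn (by simp)).differentiableAt
        (hU.mem_nhds hy)).hasFDerivAt
    -- fderiv lam = g on U
    have hfl : ∀ y ∈ U, HasFDerivAt lam (g y) y := by
      intro y hy
      have h1 := (horth y hy).1
      have h2 := (horth y hy).2
      rw [D1, hsurf lam y hy _ (hlamd y hy) (1, 0)] at h1
      rw [D2, hsurf lam y hy _ (hlamd y hy) (0, 1)] at h2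
      have hEq : fderiv ℝ lam y = g y := by
        refine ContinuousLinearMap.ext fun v => ?_
        rw [clm_expand (fderiv ℝ lam y) v, clm_expand (g y) v]
        have e1 : fderiv ℝ lam y (1, 0) = g y (1, 0) := by rw [hgval]; linarith
        have e2 : fderiv ℝ lam y (0, 1) = g y (0, 1) := by rw [hgval]; linarith
        rw [e1, e2]
      exact hEq ▸ hlamd y hy
    have hev : ∀ᶠ y in nhds k, HasFDerivAt lam (g y) y := by
      filter_upwards [hU.mem_nhds hk] with y hy using hfl y hy
    have hsec := second_derivative_symmetric_of_eventually hev (hgderiv k hk).1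
      ((1:ℝ), (0:ℝ)) ((0:ℝ), (1:ℝ))
    rw [(hgderiv k hk).2, (hgderiv k hk).2, hPsym k hk (1,0) (0,1)] at hsec
    have h12 : ⟪fderiv ℝ u k (1,0), fderiv ℝ P k (0,1)⟫
        = ⟪fderiv ℝ u k (0,1), fderiv ℝ P k (1,0)⟫ := by linarith
    rw [D1, D2, D1, D2]
    calc ⟪fderiv ℝ P k (1,0), fderiv ℝ u k (0,1)⟫
        = ⟪fderiv ℝ u k (0,1), fderiv ℝ P k (1,0)⟫ := real_inner_comm _ _
      _ = ⟪fderiv ℝ u k (1,0), fderiv ℝ P k (0,1)⟫ := h12.symm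
      _ = ⟪fderiv ℝ P k (0,1), fderiv ℝ u k (1,0)⟫ := real_inner_comm _ _
  · -- Lagrangian → normal
    intro hlag
    have hsym : ∀ k ∈ U, ∀ v w, fderiv ℝ g k v w = fderiv ℝ g k w v := by
      intro k hk v w
      rw [(hgderiv k hk).2, (hgderiv k hk).2, hPsym k hk v w]
      have hb : ⟪fderiv ℝ u k v, fderiv ℝ P k w⟫ = ⟪fderiv ℝ u k w, fderiv ℝ P k v⟫ := by
        have hkey : ⟪fderiv ℝ u k (1,0), fderiv ℝ P k (0,1)⟫
            = ⟪fderiv ℝ u k (0,1), fderiv ℝ P k (1,0)⟫ := by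
          have hl := hlag k hk
          rw [D1, D2, D1, D2] at hl
          calc ⟪fderiv ℝ u k (1,0), fderiv ℝ P k (0,1)⟫
              = ⟪fderiv ℝ P k (0,1), fderiv ℝ u k (1,0)⟫ := real_inner_comm _ _
            _ = ⟪fderiv ℝ P k (1,0), fderiv ℝ u k (0,1)⟫ := hl.symm
            _ = ⟪fderiv ℝ u k (0,1), fderiv ℝ P k (1,0)⟫ := real_inner_comm _ _
        rw [clm_expand (fderiv ℝ u k) v, clm_expand (fderiv ℝ u k) w,
          clm_expand (fderiv ℝ P k) v, clm_expand (fderiv ℝ P k) w]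
        simp only [inner_add_left, inner_add_right, real_inner_smul_left,
          real_inner_smul_right]
        rw [hkey]
        ring
      rw [hb]
    obtain ⟨lam, hlamsmooth, hlamd⟩ := poincare_exists hU hconv hgsmooth hsym
    refine ⟨lam, hlamsmooth, fun k hk => ?_⟩
    constructor
    · rw [D1, hsurf lam k hk _ (hlamd k hk) (1, 0), hgval]; ring
    · rw [D2, hsurf lam k hk _ (hlamd k hk) (0, 1), hgval]; ring
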